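/- arXiv:1412.8025 — 2 statements merged into one kernel-verified Lean document; each statement's English description precedes it below -/
import Mathlib

section
/- Let Ω be a normal subgroup of finite index n in a group Γ, π: Ω → O(H) an orthogonal representation, and q: Ω → H a quasi-cocycle with defect D(q). With the notation f_γ(λ̂) = t_λ̂ γ t_{λ̂γ}⁻¹ ∈ Ω and the induced representation π̃: Γ → O(⊕_{Γ/Ω} H), the map q̃: Γ → ⊕_{Γ/Ω} H defined by q̃(γ) = ⊕_λ̂ q(f_γ(λ̂)) is a quasi-cocycle for π̃ with defect D(q̃) ≤ n^{1/2} · D(q). Moreover, if the representatives are chosen with t_ê = e, then ‖q̃(γ)‖ ≥ ‖q(γ)‖ for every γ ∈ Ω; in particular, if q is unbounded on Ω then q̃ is unbounded on Γ. -/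
/-- The induced quasi-cocycle: if `q` is a quasi-cocycle of defect `D` for an
orthogonal representation `π` of a finite-index normal subgroup `Ω ⊴ Γ`, then
`q̃(γ) = ⊕_λ̂ q(f_γ(λ̂))` is a quasi-cocycle for the induced representation with
defect at most `√[Γ:Ω] · D`; with representatives chosen so `t_ê = e`, one has
`‖q̃(γ)‖ ≥ ‖q(γ)‖` for `γ ∈ Ω`, so `q̃` is unbounded whenever `q` is. -/
theorem induced_quasicocycle
    {G : Type} [Group G] (Ω : Subgroup G) [Ω.Normal] [Fintype (G ⧸ Ω)]
    {H : Type} [NormedAddCommGroup H] [InnerProductSpace ℝ H]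
    (π : Ω →* (H ≃ₗᵢ[ℝ] H))
    (t : G ⧸ Ω → G) (ht : ∀ x : G ⧸ Ω, (QuotientGroup.mk (t x) : G ⧸ Ω) = x)
    (ht1 : t 1 = 1)
    (hf : ∀ (γ : G) (x : G ⧸ Ω),
      t x * γ * (t (x * QuotientGroup.mk γ))⁻¹ ∈ Ω)
    (q : Ω → H) (D : ℝ)
    (hD : ∀ a b : Ω, ‖q (a * b) - q a - π a (q b)‖ ≤ D)
    (Pind : G →*
      (PiLp 2 (fun _ : G ⧸ Ω => H) ≃ₗᵢ[ℝ] PiLp 2 (fun _ : G ⧸ Ω => H)))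
    (hPind : ∀ (γ : G) (ξ : PiLp 2 (fun _ : G ⧸ Ω => H)) (x : G ⧸ Ω),
      (WithLp.equiv 2 _) ((Pind γ) ξ) x
        = π ⟨t x * γ * (t (x * QuotientGroup.mk γ))⁻¹, hf γ x⟩
            ((WithLp.equiv 2 _) ξ (x * QuotientGroup.mk γ))) :
    let qt : G → PiLp 2 (fun _ : G ⧸ Ω => H) := fun γ =>
      (WithLp.equiv 2 _).symm
        (fun x : G ⧸ Ω => q ⟨t x * γ * (t (x * QuotientGroup.mk γ))⁻¹, hf γ x⟩)
    (∀ g h : G,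
      ‖qt (g * h) - qt g - Pind g (qt h)‖ ≤ Real.sqrt (Fintype.card (G ⧸ Ω)) * D) ∧
    (∀ ω : Ω, ‖q ω‖ ≤ ‖qt (ω : G)‖) ∧
    ((¬ BddAbove (Set.range fun ω : Ω => ‖q ω‖)) →
      ¬ BddAbove (Set.range fun g : G => ‖qt g‖)) := by
  intro qt
  have hD0 : 0 ≤ D := le_trans (norm_nonneg _) (hD 1 1)
  -- coordinate bound lemma
  have hcoord : ∀ (g h : G) (x : G ⧸ Ω),
      ‖(qt (g * h) - qt g - Pind g (qt h)) x‖ ≤ D := by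
    intro g h x
    have hv : (qt (g * h) - qt g - Pind g (qt h)) x
        = qt (g * h) x - qt g x - (Pind g (qt h)) x := rfl
    set a : Ω := ⟨t x * g * (t (x * QuotientGroup.mk g))⁻¹, hf g x⟩ with ha
    set b : Ω := ⟨t (x * QuotientGroup.mk g) * h
      * (t (x * QuotientGroup.mk g * QuotientGroup.mk h))⁻¹,
      hf h (x * QuotientGroup.mk g)⟩ with hb
    have hmk : (QuotientGroup.mk (g * h) : G ⧸ Ω)
        = QuotientGroup.mk g * QuotientGroup.mk h := rfl
    have h1 : qt (g * h) x = q (a * b) := by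
      show q _ = q (a * b)
      congr 1
      ext
      simp only [ha, hb, Subgroup.coe_mul, hmk, mul_assoc]
      simp [mul_assoc]
    have h2 : (Pind g (qt h)) x
        = π a (q b) := by
      have := hPind g (qt h) x
      exact this
    rw [hv, h1, h2]
    exact hD a b
  refine ⟨?_, ?_, ?_⟩
  · intro g h
    set v := qt (g * h) - qt g - Pind g (qt h) with hvdef
    have hsq : ‖v‖ ^ 2 ≤ (Fintype.card (G ⧸ Ω) : ℝ) * D ^ 2 := by
      rw [PiLp.norm_sq_eq_of_L2]
      calc ∑ x : G ⧸ Ω, ‖v x‖ ^ 2 ≤ ∑ _x : G ⧸ Ω, D ^ 2 :=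
            Finset.sum_le_sum fun x _ => by
              have := hcoord g h x
              exact pow_le_pow_left₀ (norm_nonneg _) this 2
        _ = (Fintype.card (G ⧸ Ω) : ℝ) * D ^ 2 := by
            simp [Finset.sum_const, Finset.card_univ]
    have : ‖v‖ ≤ Real.sqrt ((Fintype.card (G ⧸ Ω) : ℝ) * D ^ 2) := by
      rw [← Real.sqrt_sq (norm_nonneg v)]
      exact Real.sqrt_le_sqrt hsq
    calc ‖v‖ ≤ Real.sqrt ((Fintype.card (G ⧸ Ω) : ℝ) * D ^ 2) := this
      _ = Real.sqrt (Fintype.card (G ⧸ Ω)) * D := by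
          rw [Real.sqrt_mul (by positivity), Real.sqrt_sq hD0]
  · intro ω
    have h1x : (1 : G ⧸ Ω) * QuotientGroup.mk (ω : G) = 1 := by
      simp [QuotientGroup.eq_one_iff, ω.2]
    have hval : qt (ω : G) 1 = q ω := by
      show q _ = q ω
      congr 1
      ext
      simp [h1x, ht1]
    have : ‖qt (ω : G) 1‖ ^ 2 ≤ ‖qt (ω : G)‖ ^ 2 := by
      rw [PiLp.norm_sq_eq_of_L2]
      exact Finset.single_le_sum (f := fun x => ‖qt (ω : G) x‖ ^ 2)
        (fun x _ => by positivity) (Finset.mem_univ 1)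
    rw [hval] at this
    nlinarith [norm_nonneg (q ω), norm_nonneg (qt (ω : G))]
  · intro hq hbdd
    apply hq
    obtain ⟨M, hM⟩ := hbdd
    refine ⟨M, ?_⟩
    rintro y ⟨ω, rfl⟩
    calc ‖q ω‖ ≤ ‖qt (ω : G)‖ := by
          -- reuse second part; redo proof inline
          have h1x : (1 : G ⧸ Ω) * QuotientGroup.mk (ω : G) = 1 := by
            simp [QuotientGroup.eq_one_iff, ω.2]
          have hval : qt (ω : G) 1 = q ω := by
            show q _ = q ω
            congr 1
            ext
            simp [h1x, ht1]
          have hsq : ‖qt (ω : G) 1‖ ^ 2 ≤ ‖qt (ω : G)‖ ^ 2 := by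
            rw [PiLp.norm_sq_eq_of_L2]
            exact Finset.single_le_sum (f := fun x => ‖qt (ω : G) x‖ ^ 2)
              (fun x _ => by positivity) (Finset.mem_univ 1)
          rw [hval] at hsq
          nlinarith [norm_nonneg (q ω), norm_nonneg (qt (ω : G))]
      _ ≤ M := hM ⟨(ω : G), rfl⟩
end

section
/- Let Γ be a group that has only finitely many finite conjugacy classes. Let F be the union of all finite conjugacy classes of Γ (the FC-center). Then F is a finite normal subgroup of Γ, and the quotient Γ_0 = Γ/F is an ICC group (every nontrivial conjugacy class of Γ_0 is infinite). In particular there is a short exact sequence 1 → F → Γ → Γ_0 → 1 with F finite and Γ_0 ICC. -/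
/-- A group is ICC if every nontrivial conjugacy class is infinite. -/
def IsICC (G : Type*) [Group G] : Prop :=
  ∀ g : G, g ≠ 1 → {h : G | IsConj g h}.Infinite

theorem classEq {G : Type} [Group G] {a b : G} (h : IsConj a b) :
    {x : G | IsConj a x} = {x : G | IsConj b x} := by
  ext x; exact ⟨fun hx => h.symm.trans hx, fun hx => h.trans hx⟩

/-- If a group `Γ` has only finitely many finite conjugacy classes, then its
FC-center `F` (the union of all finite conjugacy classes) is a finite normal
subgroup and `Γ/F` is ICC; in particular there is a short exact sequence
`1 → F → Γ → Γ₀ → 1` with `F` finite and `Γ₀` ICC. -/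
theorem fc_center_finite_and_quotient_icc
    {G : Type} [Group G]
    (hfin : {S : Set G | (∃ g : G, S = {h : G | IsConj g h}) ∧ S.Finite}.Finite) :
    ∃ (F : Subgroup G) (hn : F.Normal),
      ((F : Set G) = {g : G | {h : G | IsConj g h}.Finite}) ∧
      Finite F ∧
      @IsICC (G ⧸ F) (@QuotientGroup.Quotient.group G _ F hn) := by
  classical
  let F : Subgroup G :=
    { carrier := {g : G | {h : G | IsConj g h}.Finite}
      one_mem' := by
        have : {h : G | IsConj (1:G) h} = {1} := by
          ext h; simp [eq_comm]
        simp only [Set.mem_setOf_eq, this]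
        exact Set.finite_singleton 1
      mul_mem' := by
        intro a b ha hb
        simp only [Set.mem_setOf_eq] at *
        have hsub : {h : G | IsConj (a*b) h} ⊆
            Set.image2 (· * ·) {h : G | IsConj a h} {h : G | IsConj b h} := by
          intro h hh
          rw [Set.mem_setOf_eq, isConj_iff] at hh
          obtain ⟨c, rfl⟩ := hh
          exact ⟨c*a*c⁻¹, isConj_iff.2 ⟨c, rfl⟩, c*b*c⁻¹, isConj_iff.2 ⟨c, rfl⟩, by group⟩
        exact (ha.image2 _ hb).subset hsub
      inv_mem' := by
        intro a ha
        simp only [Set.mem_setOf_eq] at *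
        have hsub : {h : G | IsConj a⁻¹ h} ⊆ (·⁻¹) '' {h : G | IsConj a h} := by
          intro h hh
          rw [Set.mem_setOf_eq, isConj_iff] at hh
          obtain ⟨c, rfl⟩ := hh
          exact ⟨c*a*c⁻¹, isConj_iff.2 ⟨c, rfl⟩, by group⟩
        exact (ha.image _).subset hsub }
  have hmemF : ∀ g : G, g ∈ F ↔ {h : G | IsConj g h}.Finite := fun g => Iff.rfl
  have hn : F.Normal := by
    constructor
    intro g hg h
    rw [hmemF] at *
    have : IsConj g (h*g*h⁻¹) := isConj_iff.2 ⟨h, rfl⟩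
    rwa [← classEq this]
  -- F is finite
  have hFfin : (F : Set G).Finite := by
    have hsub : (F : Set G) ⊆
        ⋃₀ {S : Set G | (∃ g : G, S = {h : G | IsConj g h}) ∧ S.Finite} := by
      intro g hg
      exact ⟨{h : G | IsConj g h}, ⟨⟨g, rfl⟩, hg⟩, IsConj.refl g⟩
    exact (hfin.sUnion (fun S hS => hS.2)).subset hsub
  refine ⟨F, hn, rfl, hFfin.to_subtype, ?_⟩
  intro x hx hfinx
  obtain ⟨g, rfl⟩ := QuotientGroup.mk_surjective x
  -- the preimage of the conjugacy class of x is finite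
  have hpre : ((QuotientGroup.mk : G → G ⧸ F) ⁻¹' {y | IsConj (QuotientGroup.mk g) y}).Finite := by
    have : ((QuotientGroup.mk : G → G ⧸ F) ⁻¹' {y | IsConj (QuotientGroup.mk g) y}) =
        ⋃ y ∈ {y : G ⧸ F | IsConj (QuotientGroup.mk g) y},
          {z : G | (QuotientGroup.mk z : G ⧸ F) = y} := by
      ext z
      simp only [Set.mem_preimage, Set.mem_setOf_eq, Set.mem_iUnion]
      exact ⟨fun h => ⟨_, h, rfl⟩, fun ⟨y, hy, hz⟩ => hz ▸ hy⟩
    rw [this]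
    refine hfinx.biUnion ?_
    intro y hy
    obtain ⟨a, rfl⟩ := QuotientGroup.mk_surjective y
    have : {z : G | (QuotientGroup.mk z : G ⧸ F) = QuotientGroup.mk a} =
        (fun w => a * w) '' (F : Set G) := by
      ext z
      simp only [Set.mem_setOf_eq, Set.mem_image]
      constructor
      · intro h
        refine ⟨a⁻¹ * z, ?_, by group⟩
        have := (QuotientGroup.eq (s := F)).1 h.symm
        simpa using this
      · rintro ⟨w, hw, rfl⟩
        exact (QuotientGroup.eq (s := F)).2 (by simpa using hw) |>.symm
    rw [this]
    exact hFfin.image _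
  have hgF : {h : G | IsConj g h}.Finite := by
    refine hpre.subset ?_
    intro h hh
    exact (QuotientGroup.mk' F).map_isConj hh
  exact hx ((QuotientGroup.eq_one_iff g).2 ((hmemF g).2 hgF))
end
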